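/- Let X be a quasicontinuous space. Then L*_X-convergence is topological and coincides with convergence in the Lawson topology: a net (x_i) converges to x in λ(X) if and only if ((x_i), x) ∈ L*_X. -/

import Mathlib

namespace Conv

variable {X : Type}

/-- A directed preorder (index of a net), given as an explicit relation. -/
def DirIdx {I : Type} (r : I → I → Prop) : Prop :=
  Nonempty I ∧ (∀ i, r i i) ∧ (∀ a b c : I, r a b → r b c → r a c) ∧
    ∀ a b : I, ∃ c, r a c ∧ r b c

/-- Specialization order relative to a family `T` of "open" sets. -/
def sle (T : Set (Set X)) (x y : X) : Prop := ∀ U ∈ T, x ∈ U → y ∈ U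

/-- Upper closure of a set w.r.t. the specialization order of `T`. -/
def upset (T : Set (Set X)) (A : Set X) : Set X := {z | ∃ a ∈ A, sle T a z}

/-- `D` is a (nonempty) directed subset w.r.t. the specialization order of `T`. -/
def IsDirSet (T : Set (Set X)) (D : Set X) : Prop := D.Nonempty ∧ DirectedOn (sle T) D

/-- A subset `D` (viewed as a monotone net) converges to `x` w.r.t. `T`. -/
def DConv (T : Set (Set X)) (D : Set X) (x : X) : Prop :=
  ∀ U ∈ T, x ∈ U → (D ∩ U).Nonempty

/-- `U` is directed-open w.r.t. `T`. -/
def DirOpen (T : Set (Set X)) (U : Set X) : Prop :=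
  ∀ D x, IsDirSet T D → DConv T D x → x ∈ U → (D ∩ U).Nonempty

/-- The family of directed-open sets. -/
def DTop (T : Set (Set X)) : Set (Set X) := {U | DirOpen T U}

/-- The family of open sets of a topological space. -/
def opens (X : Type) [TopologicalSpace X] : Set (Set X) := {U | IsOpen U}

/-- Every directed-open set belongs to `T`. -/
def DirT (T : Set (Set X)) : Prop := ∀ U, DirOpen T U → U ∈ T

/-- A directed space: every directed-open set is open. -/
def IsDirectedSpace (X : Type) [TopologicalSpace X] : Prop := DirT (opens X)

/-- A net is eventually in `U`. -/
def EvIn {I : Type} (r : I → I → Prop) (xi : I → X) (U : Set X) : Prop :=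
  ∃ k, ∀ i, r k i → xi i ∈ U

/-- `y` is an eventual lower bound of the net `xi`. -/
def EvLB (T : Set (Set X)) {I : Type} (r : I → I → Prop) (xi : I → X) (y : X) : Prop :=
  ∃ k, ∀ i, r k i → sle T y (xi i)

/-- Topological convergence of a net w.r.t. the family `T` of open sets. -/
def NConv (T : Set (Set X)) {I : Type} (r : I → I → Prop) (xi : I → X) (x : X) : Prop :=
  ∀ U ∈ T, x ∈ U → EvIn r xi U

/-- `((x_i), x) ∈ S_X`: some directed set of eventual lower bounds converges to `x`. -/
def SConv (T : Set (Set X)) {I : Type} (r : I → I → Prop) (xi : I → X) (x : X) : Prop :=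
  ∃ D : Set X, IsDirSet T D ∧ (∀ d ∈ D, EvLB T r xi d) ∧ DConv T D x

/-- `U` is open in the topology determined by `S_X`. -/
def SOpen (T : Set (Set X)) (U : Set X) : Prop :=
  ∀ (I : Type) (r : I → I → Prop), DirIdx r → ∀ (xi : I → X) (x : X),
    SConv T r xi x → x ∈ U → EvIn r xi U

/-- `y ≪_d x`. -/
def WayBelow (T : Set (Set X)) (y x : X) : Prop :=
  ∀ D : Set X, IsDirSet T D → DConv T D x → ∃ d ∈ D, sle T y d

/-- A continuous space (relative to the family `T`). -/
def IsContinuousT (T : Set (Set X)) : Prop :=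
  DirT T ∧ ∀ x : X, IsDirSet T {y | WayBelow T y x} ∧ DConv T {y | WayBelow T y x} x

def IsContinuousSpace (X : Type) [TopologicalSpace X] : Prop := IsContinuousT (opens X)

/-- `G ≪_d H` for subsets. -/
def SWayBelow (T : Set (Set X)) (G H : Set X) : Prop :=
  ∀ (D : Set X) (x : X), IsDirSet T D → DConv T D x → x ∈ H → (D ∩ upset T G).Nonempty

/-- A directed family of finite sets (ordered by reverse inclusion of upper closures). -/
def IsDirFam (T : Set (Set X)) (F : Set (Set X)) : Prop :=
  F.Nonempty ∧ (∀ A ∈ F, A.Finite) ∧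
    ∀ A ∈ F, ∀ B ∈ F, ∃ C ∈ F, upset T C ⊆ upset T A ∧ upset T C ⊆ upset T B

/-- Convergence of a family of finite sets to `x`. -/
def FamConv (T : Set (Set X)) (F : Set (Set X)) (x : X) : Prop :=
  ∀ U ∈ T, x ∈ U → ∃ A ∈ F, upset T A ⊆ U

/-- `fin_d(x)`. -/
def finD (T : Set (Set X)) (x : X) : Set (Set X) := {A | A.Finite ∧ SWayBelow T A {x}}

def IsQuasicontinuousT (T : Set (Set X)) : Prop :=
  DirT T ∧ ∀ x : X, IsDirFam T (finD T x) ∧ FamConv T (finD T x) x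

def IsQuasicontinuousSpace (X : Type) [TopologicalSpace X] : Prop :=
  IsQuasicontinuousT (opens X)

/-- `A` is a quasi eventual lower bound of the net `xi`. -/
def QEvLB (T : Set (Set X)) {I : Type} (r : I → I → Prop) (xi : I → X) (A : Set X) : Prop :=
  A.Finite ∧ ∃ k, ∀ i, r k i → xi i ∈ upset T A

/-- `((x_i), x) ∈ S*_X`. -/
def QSConv (T : Set (Set X)) {I : Type} (r : I → I → Prop) (xi : I → X) (x : X) : Prop :=
  ∃ F : Set (Set X), IsDirFam T F ∧ (∀ A ∈ F, QEvLB T r xi A) ∧ FamConv T F x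

/-- `U` is open in the topology determined by `S*_X`. -/
def QSOpen (T : Set (Set X)) (U : Set X) : Prop :=
  ∀ (I : Type) (r : I → I → Prop), DirIdx r → ∀ (xi : I → X) (x : X),
    QSConv T r xi x → x ∈ U → EvIn r xi U

/-- `x ≡ liminf x_i`. -/
def IsLiminf (T : Set (Set X)) {I : Type} (r : I → I → Prop) (xi : I → X) (x : X) : Prop :=
  (∀ y, EvLB T r xi y → sle T y x) ∧
  (∀ z, (∀ y, EvLB T r xi y → sle T y z) → sle T x z) ∧
  SConv T r xi x

/-- `f : (J,s) → (I,r)` is a subnet map: monotone and cofinal, with directed domain. -/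
def Subnet {I J : Type} (r : I → I → Prop) (s : J → J → Prop) (f : J → I) : Prop :=
  DirIdx s ∧ (∀ a b, s a b → r (f a) (f b)) ∧ ∀ i, ∃ j, r i (f j)

/-- `z` is a cofinal lower bound of the net `xi`. -/
def CofLB (T : Set (Set X)) {I : Type} (r : I → I → Prop) (xi : I → X) (z : X) : Prop :=
  ∀ i, ∃ j, r i j ∧ sle T z (xi j)

/-- `((x_i), x) ∈ L_X`: every subnet has liminf `x`. -/
def LConv (T : Set (Set X)) {I : Type} (r : I → I → Prop) (xi : I → X) (x : X) : Prop :=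
  ∀ (J : Type) (s : J → J → Prop) (f : J → I), Subnet r s f →
    IsLiminf T s (fun j => xi (f j)) x

/-- `U` is open in the liminf topology `L(X)`. -/
def LOpen (T : Set (Set X)) (U : Set X) : Prop :=
  ∀ (I : Type) (r : I → I → Prop), DirIdx r → ∀ (xi : I → X) (x : X),
    LConv T r xi x → x ∈ U → EvIn r xi U

/-- `x ≡_q liminf x_i`. -/
def QLiminf (T : Set (Set X)) {I : Type} (r : I → I → Prop) (xi : I → X) (x : X) : Prop :=
  QSConv T r xi x ∧ ∀ y, EvLB T r xi y → sle T y x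

/-- `((x_i), x) ∈ L*_X`: every subnet quasi-liminf converges to `x`. -/
def QLConv (T : Set (Set X)) {I : Type} (r : I → I → Prop) (xi : I → X) (x : X) : Prop :=
  ∀ (J : Type) (s : J → J → Prop) (f : J → I), Subnet r s f →
    QLiminf T s (fun j => xi (f j)) x

/-- `U` is open in the quasi-liminf topology `L*(X)`. -/
def QLOpen (T : Set (Set X)) (U : Set X) : Prop :=
  ∀ (I : Type) (r : I → I → Prop), DirIdx r → ∀ (xi : I → X) (x : X),
    QLConv T r xi x → x ∈ U → EvIn r xi U

/-- The Lawson topology: generated by the opens of `X` and complements of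
principal upper sets. -/
def lawson (X : Type) [TopologicalSpace X] : Set (Set X) :=
  {U | (TopologicalSpace.generateFrom
      (opens X ∪ {V | ∃ y : X, V = {z : X | sle (opens X) y z}ᶜ})).IsOpen U}


section Aux

variable {T : Set (Set X)}

lemma sle_refl' (T : Set (Set X)) (x : X) : sle T x x := fun _ _ h => h

lemma sle_trans' {x y z : X} (h1 : sle T x y) (h2 : sle T y z) : sle T x z :=
  fun U hU hx => h2 U hU (h1 U hU hx)

/-- `V` is an upper set w.r.t. the specialization order of `T`. -/
def Upper (T : Set (Set X)) (V : Set X) : Prop := ∀ ⦃a b : X⦄, a ∈ V → sle T a b → b ∈ V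

lemma upper_upset (A : Set X) : Upper T (upset T A) := by
  rintro a b ⟨c, hc, hca⟩ hab
  exact ⟨c, hc, sle_trans' hca hab⟩

lemma mem_upset_self {A : Set X} {a : X} (ha : a ∈ A) : a ∈ upset T A :=
  ⟨a, ha, sle_refl' T a⟩

lemma DConv_of_sle {D : Set X} {a b : X} (h : sle T a b) (hD : DConv T D b) : DConv T D a :=
  fun U hU haU => hD U hU (h U hU haU)

lemma singleton_dirset (z : X) : IsDirSet T {z} := by
  refine ⟨⟨z, rfl⟩, ?_⟩
  intro a ha b hb
  rw [Set.mem_singleton_iff] at ha hb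
  subst ha
  refine ⟨a, rfl, sle_refl' T a, ?_⟩
  rw [hb]
  exact sle_refl' T a

lemma mem_upset_of_swb {A : Set X} {z : X} (h : SWayBelow T A {z}) : z ∈ upset T A := by
  obtain ⟨d, hd, hdA⟩ := h {z} z (singleton_dirset z) (fun U hU hzU => ⟨z, rfl, hzU⟩) rfl
  rw [show d = z from hd] at hdA
  exact hdA

lemma upper_swb {A : Set X} : Upper T {z | SWayBelow T A {z}} := by
  intro a b ha hab D y h1 h2 h3
  rw [show y = b from h3] at h2
  exact ha D a h1 (DConv_of_sle hab h2) rfl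

lemma swb_of_sle {A : Set X} {a b : X} (ha : SWayBelow T A {a}) (hab : sle T a b) :
    SWayBelow T A {b} := upper_swb ha hab

lemma upset_diff_mono {B C V : Set X} (h : upset T C ⊆ upset T B) (hV : Upper T V) :
    upset T (C \ V) ⊆ upset T (B \ V) := by
  rintro z ⟨c, ⟨hcC, hcV⟩, hcz⟩
  obtain ⟨b, hbB, hbc⟩ := h (mem_upset_self hcC)
  exact ⟨b, ⟨hbB, fun hbV => hcV (hV hbV hbc)⟩, sle_trans' hbc hcz⟩

/-- Rudin's lemma (order-theoretic form, for the specialization preorder of `T`). -/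
lemma rudin (T : Set (Set X)) (A : Set (Set X)) (h1 : A.Nonempty)
    (h2 : ∀ S ∈ A, S.Finite ∧ S.Nonempty)
    (h3 : ∀ S₁ ∈ A, ∀ S₂ ∈ A, ∃ S₃ ∈ A, upset T S₃ ⊆ upset T S₁ ∧ upset T S₃ ⊆ upset T S₂) :
    ∃ D : Set X, IsDirSet T D ∧ (∀ d ∈ D, ∃ S ∈ A, ∃ u ∈ S, sle T d u) ∧
      ∀ S ∈ A, (D ∩ upset T S).Nonempty := by
  classical
  set M₀ : Set X := {m | ∃ S ∈ A, ∃ u ∈ S, sle T m u} with hM₀def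
  set P : Set (Set X) :=
    {M | M ⊆ M₀ ∧ (∀ ⦃a b : X⦄, a ∈ M → sle T b a → b ∈ M) ∧ ∀ S ∈ A, (M ∩ S).Nonempty}
    with hPdef
  have hM₀P : M₀ ∈ P := by
    refine ⟨subset_rfl, ?_, ?_⟩
    · rintro a b ⟨S, hS, u, hu, hau⟩ hba
      exact ⟨S, hS, u, hu, sle_trans' hba hau⟩
    · intro S hS
      obtain ⟨s, hs⟩ := (h2 S hS).2
      exact ⟨s, ⟨S, hS, s, hs, sle_refl' T s⟩, hs⟩
  have hchain : ∀ c ⊆ P, IsChain (· ⊆ ·) c → c.Nonempty → ∃ lb ∈ P, ∀ s ∈ c, lb ⊆ s := by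
    intro c hcP hchain ⟨M₁, hM₁⟩
    refine ⟨⋂₀ c, ⟨?_, ?_, ?_⟩, fun s hs => Set.sInter_subset_of_mem hs⟩
    · exact (Set.sInter_subset_of_mem hM₁).trans (hcP hM₁).1
    · intro a b ha hba
      intro M hM
      exact (hcP hM).2.1 (ha M hM) hba
    · intro S hS
      -- the intersections with S form a finite chain of nonempty sets
      set I : Set (Set X) := (fun M => M ∩ S) '' c with hIdef
      have hIfin : I.Finite := by
        apply ((h2 S hS).1.finite_subsets).subset
        rintro t ⟨M, hM, rfl⟩
        exact Set.inter_subset_right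
      have hIne : I.Nonempty := ⟨M₁ ∩ S, M₁, hM₁, rfl⟩
      obtain ⟨m, hmI, hmmin⟩ : ∃ m ∈ I, ∀ m' ∈ I, m' ⊆ m → m = m' := by
        obtain ⟨m, hm⟩ := hIfin.exists_minimal hIne
        exact ⟨m, hm.1, fun m' hm' h => le_antisymm (hm.2 hm' h) h⟩
      obtain ⟨Mm, hMm, rfl⟩ := hmI
      have hmsub : ∀ M ∈ c, Mm ∩ S ⊆ M ∩ S := by
        intro M hM
        rcases eq_or_ne Mm M with rfl | hne
        · exact subset_rfl
        · rcases hchain hMm hM hne with hMM | hMM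
          · exact fun a ha => ⟨hMM ha.1, ha.2⟩
          · have : Mm ∩ S = M ∩ S :=
              hmmin (M ∩ S) ⟨M, hM, rfl⟩ (fun a ha => ⟨hMM ha.1, ha.2⟩)
            exact this.le
      obtain ⟨a, haM, haS⟩ := (hcP hMm).2.2 S hS
      refine ⟨a, ?_, haS⟩
      intro M hM
      exact (hmsub M hM ⟨haM, haS⟩).1
  obtain ⟨M, -, hMmin⟩ := zorn_superset_nonempty P hchain M₀ hM₀P
  have hMP : M ∈ P := hMmin.prop
  -- irreducibility of the minimal M
  have hirr : ∀ U₁ U₂ : Set X, Upper T U₁ → Upper T U₂ → (M ∩ U₁).Nonempty →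
      (M ∩ U₂).Nonempty → ∃ m ∈ M, m ∈ U₁ ∧ m ∈ U₂ := by
    intro U₁ U₂ hU₁ hU₂ hne₁ hne₂
    have hdiff : ∀ U : Set X, Upper T U → (M ∩ U).Nonempty →
        ∃ S ∈ A, ∀ s ∈ S, s ∈ M → s ∈ U := by
      intro U hU ⟨m, hmM, hmU⟩
      by_contra hcon
      push_neg at hcon
      have hMU : M \ U ∈ P := by
        refine ⟨Set.diff_subset.trans hMP.1, ?_, ?_⟩
        · rintro a b ⟨haM, haU⟩ hba
          exact ⟨hMP.2.1 haM hba, fun hbU => haU (hU hbU hba)⟩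
        · intro S hS
          obtain ⟨s, hsS, hsM, hsU⟩ := hcon S hS
          exact ⟨s, ⟨hsM, hsU⟩, hsS⟩
      have := hMmin.eq_of_subset hMU Set.diff_subset
      rw [← this] at hmM
      exact hmM.2 hmU
    obtain ⟨S₁, hS₁, hS₁U⟩ := hdiff U₁ hU₁ hne₁
    obtain ⟨S₂, hS₂, hS₂U⟩ := hdiff U₂ hU₂ hne₂
    obtain ⟨S₃, hS₃, hsub₁, hsub₂⟩ := h3 S₁ hS₁ S₂ hS₂
    obtain ⟨m, hmM, hmS₃⟩ := hMP.2.2 S₃ hS₃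
    obtain ⟨s₁, hs₁S, hs₁m⟩ := hsub₁ (mem_upset_self hmS₃)
    obtain ⟨s₂, hs₂S, hs₂m⟩ := hsub₂ (mem_upset_self hmS₃)
    have hs₁M : s₁ ∈ M := hMP.2.1 hmM hs₁m
    have hs₂M : s₂ ∈ M := hMP.2.1 hmM hs₂m
    exact ⟨m, hmM, hU₁ (hS₁U s₁ hs₁S hs₁M) hs₁m, hU₂ (hS₂U s₂ hs₂S hs₂M) hs₂m⟩
  obtain ⟨S₀, hS₀⟩ := h1
  obtain ⟨m₀, hm₀M, hm₀S⟩ := hMP.2.2 S₀ hS₀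
  refine ⟨M, ⟨⟨m₀, hm₀M⟩, ?_⟩, fun d hd => hMP.1 hd, ?_⟩
  · intro a ha b hb
    have hUa : Upper T {z | sle T a z} := fun u v hu huv => sle_trans' hu huv
    have hUb : Upper T {z | sle T b z} := fun u v hu huv => sle_trans' hu huv
    obtain ⟨m, hmM, hma, hmb⟩ := hirr _ _ hUa hUb ⟨a, ha, sle_refl' T a⟩ ⟨b, hb, sle_refl' T b⟩
    exact ⟨m, hmM, hma, hmb⟩
  · intro S hS
    obtain ⟨s, hsM, hsS⟩ := hMP.2.2 S hS
    exact ⟨s, hsM, mem_upset_self hsS⟩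

lemma not_swb {A : Set X} {d : X} (h : ¬ SWayBelow T A {d}) :
    ∃ D', IsDirSet T D' ∧ DConv T D' d ∧ ∀ w ∈ D', w ∉ upset T A := by
  unfold SWayBelow at h
  push_neg at h
  obtain ⟨D', y, h1, h2, h3, h4⟩ := h
  rw [show y = d from h3] at h2
  exact ⟨D', h1, h2, fun w hw hwA => Set.eq_empty_iff_forall_notMem.mp h4 w ⟨hw, hwA⟩⟩

/-- Key interpolation lemma for quasicontinuous `T`. -/
lemma key (hq : IsQuasicontinuousT T) (x : X) (A : Set X) (hA : SWayBelow T A {x}) :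
    ∃ B, B.Finite ∧ SWayBelow T B {x} ∧ ∀ b ∈ B, SWayBelow T A {b} := by
  by_contra hno
  push_neg at hno
  set Z : Set X := {z | SWayBelow T A {z}} with hZdef
  have hZup : Upper T Z := upper_swb
  -- first Rudin application: a directed set converging to x avoiding Z
  set F₁ : Set (Set X) := {S | ∃ B ∈ finD T x, S = B \ Z} with hF₁def
  obtain ⟨D, hDdir, hDlow, hDmeet⟩ := by
    refine rudin T F₁ ?_ ?_ ?_
    · obtain ⟨B, hB⟩ := (hq.2 x).1.1
      exact ⟨B \ Z, B, hB, rfl⟩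
    · rintro S ⟨B, hB, rfl⟩
      obtain ⟨b, hbB, hbZ⟩ := hno B hB.1 hB.2
      exact ⟨hB.1.diff, b, hbB, hbZ⟩
    · rintro S₁ ⟨B₁, hB₁, rfl⟩ S₂ ⟨B₂, hB₂, rfl⟩
      obtain ⟨C, hC, hsub₁, hsub₂⟩ := (hq.2 x).1.2.2 B₁ hB₁ B₂ hB₂
      exact ⟨C \ Z, ⟨C, hC, rfl⟩, upset_diff_mono hsub₁ hZup, upset_diff_mono hsub₂ hZup⟩
  have hDZ : ∀ d ∈ D, ¬ SWayBelow T A {d} := by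
    intro d hd hswb
    obtain ⟨S, ⟨B, hB, rfl⟩, u, huS, hdu⟩ := hDlow d hd
    exact huS.2 (hZup hswb hdu)
  have hDconv : DConv T D x := by
    intro U hU hxU
    obtain ⟨B, hB, hBU⟩ := (hq.2 x).2 U hU hxU
    obtain ⟨d, hdD, b, hbB, hbd⟩ := hDmeet (B \ Z) ⟨B, hB, rfl⟩
    exact ⟨d, hdD, hbd U hU (hBU (mem_upset_self hbB.1))⟩
  -- every finite approximant of any d ∈ D meets the complement of ↑A
  have hCW : ∀ d ∈ D, ∀ C ∈ finD T d, ∃ c ∈ C, c ∉ upset T A := by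
    intro d hd C hC
    obtain ⟨D', hD'dir, hD'conv, hD'A⟩ := not_swb (hDZ d hd)
    obtain ⟨w, hwD', c, hcC, hcw⟩ := hC.2 D' d hD'dir hD'conv rfl
    exact ⟨c, hcC, fun hcA => hD'A w hwD' ((upper_upset A) hcA hcw)⟩
  -- second Rudin application
  set F₂ : Set (Set X) := {S | ∃ d ∈ D, ∃ C ∈ finD T d, S = C \ upset T A} with hF₂def
  obtain ⟨E, hEdir, hElow, hEmeet⟩ := by
    refine rudin T F₂ ?_ ?_ ?_
    · obtain ⟨d₀, hd₀⟩ := hDdir.1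
      obtain ⟨C₀, hC₀⟩ := (hq.2 d₀).1.1
      exact ⟨C₀ \ upset T A, d₀, hd₀, C₀, hC₀, rfl⟩
    · rintro S ⟨d, hd, C, hC, rfl⟩
      obtain ⟨c, hcC, hcA⟩ := hCW d hd C hC
      exact ⟨hC.1.diff, c, hcC, hcA⟩
    · rintro S₁ ⟨d₁, hd₁, C₁, hC₁, rfl⟩ S₂ ⟨d₂, hd₂, C₂, hC₂, rfl⟩
      obtain ⟨d₃, hd₃, h13, h23⟩ := hDdir.2 d₁ hd₁ d₂ hd₂
      have hC₁' : C₁ ∈ finD T d₃ := ⟨hC₁.1, swb_of_sle hC₁.2 h13⟩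
      have hC₂' : C₂ ∈ finD T d₃ := ⟨hC₂.1, swb_of_sle hC₂.2 h23⟩
      obtain ⟨C₃, hC₃, hsub₁, hsub₂⟩ := (hq.2 d₃).1.2.2 C₁ hC₁' C₂ hC₂'
      exact ⟨C₃ \ upset T A, ⟨d₃, hd₃, C₃, hC₃, rfl⟩,
        upset_diff_mono hsub₁ (upper_upset A), upset_diff_mono hsub₂ (upper_upset A)⟩
  have hEA : ∀ e ∈ E, e ∉ upset T A := by
    intro e he heA
    obtain ⟨S, ⟨d, hd, C, hC, rfl⟩, u, huS, heu⟩ := hElow e he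
    exact huS.2 ((upper_upset A) heA heu)
  have hEconv : DConv T E x := by
    intro U hU hxU
    obtain ⟨d, hdD, hdU⟩ := hDconv U hU hxU
    obtain ⟨C, hC, hCU⟩ := (hq.2 d).2 U hU hdU
    obtain ⟨e, heE, c, hcC, hce⟩ := hEmeet (C \ upset T A) ⟨d, hdD, C, hC, rfl⟩
    exact ⟨e, heE, hce U hU (hCU (mem_upset_self hcC.1))⟩
  obtain ⟨e, heE, heA⟩ := hA E x hEdir hEconv rfl
  exact hEA e heE heA

/-- In a quasicontinuous `T`, `{z | A ≪ z}` belongs to `T`. -/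
lemma upZ_mem (hq : IsQuasicontinuousT T) (A : Set X) : {z | SWayBelow T A {z}} ∈ T := by
  apply hq.1
  intro D z hD hconv hz
  obtain ⟨B, hBfin, hBswb, hBZ⟩ := key hq z A hz
  obtain ⟨d, hdD, b, hbB, hbd⟩ := hBswb D z hD hconv rfl
  exact ⟨d, hdD, upper_swb (hBZ b hbB) hbd⟩

end Aux

theorem stmt19 (X : Type) [TopologicalSpace X] [T0Space X]
    (h : IsQuasicontinuousSpace X) :
    ∀ (I : Type) (r : I → I → Prop), DirIdx r → ∀ (xi : I → X) (x : X),
      NConv (lawson X) r xi x ↔ QLConv (opens X) r xi x := by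
  have hopens : ∀ U ∈ opens X, U ∈ lawson X := fun U hU =>
    TopologicalSpace.GenerateOpen.basic U (Or.inl hU)
  have hcomp : ∀ y : X, {z : X | sle (opens X) y z}ᶜ ∈ lawson X := fun y =>
    TopologicalSpace.GenerateOpen.basic _ (Or.inr ⟨y, rfl⟩)
  intro I r hr xi x
  constructor
  · -- Lawson convergence implies QLConv
    intro hN J s f hsub
    obtain ⟨hs, hmono, hcof⟩ := hsub
    have hN' : NConv (lawson X) s (fun j => xi (f j)) x := by
      intro U hU hxU
      obtain ⟨k, hk⟩ := hN U hU hxU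
      obtain ⟨j0, hj0⟩ := hcof k
      exact ⟨j0, fun j hj => hk _ (hr.2.2.1 _ _ _ hj0 (hmono _ _ hj))⟩
    constructor
    · -- QSConv via fin_d(x)
      refine ⟨finD (opens X) x, (h.2 x).1, ?_, (h.2 x).2⟩
      intro A hA
      refine ⟨hA.1, ?_⟩
      obtain ⟨k, hk⟩ := hN' _ (hopens _ (upZ_mem h A)) hA.2
      exact ⟨k, fun j hj => mem_upset_of_swb (hk j hj)⟩
    · -- eventual lower bounds are below x
      rintro y ⟨k, hk⟩
      by_contra hyx
      obtain ⟨k', hk'⟩ := hN' _ (hcomp y) hyx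
      obtain ⟨m, hm1, hm2⟩ := hs.2.2.2 k k'
      exact hk' m hm2 (hk m hm1)
  · -- QLConv implies Lawson convergence
    intro hQ
    have main : ∀ U : Set X,
        TopologicalSpace.GenerateOpen
          (opens X ∪ {V | ∃ y : X, V = {z : X | sle (opens X) y z}ᶜ}) U →
        x ∈ U → EvIn r xi U := by
      intro U hU
      induction hU with
      | basic V hV =>
        rcases hV with hV | ⟨y, rfl⟩
        · intro hx
          have hid : Subnet r r id := ⟨hr, fun _ _ hab => hab, fun i => ⟨i, hr.2.1 i⟩⟩
          obtain ⟨⟨F, hF, hq', hconv⟩, -⟩ := hQ I r id hid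
          obtain ⟨A, hAF, hAU⟩ := hconv V hV hx
          obtain ⟨-, k, hk⟩ := hq' A hAF
          exact ⟨k, fun i hi => hAU (hk i hi)⟩
        · intro hx
          by_contra hev
          unfold EvIn at hev
          push_neg at hev
          simp only [Set.notMem_compl_iff] at hev
          have hJne : Nonempty {i : I // sle (opens X) y (xi i)} := by
            obtain ⟨i0⟩ := hr.1
            obtain ⟨i, _, hyi⟩ := hev i0
            exact ⟨⟨i, hyi⟩⟩
          have hsdir : DirIdx (fun a b : {i : I // sle (opens X) y (xi i)} => r a.1 b.1) := by
            refine ⟨hJne, fun a => hr.2.1 a.1, fun a b c hab hbc => hr.2.2.1 _ _ _ hab hbc, ?_⟩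
            intro a b
            obtain ⟨c, hac, hbc⟩ := hr.2.2.2 a.1 b.1
            obtain ⟨i, hci, hyi⟩ := hev c
            exact ⟨⟨i, hyi⟩, hr.2.2.1 _ _ _ hac hci, hr.2.2.1 _ _ _ hbc hci⟩
          have hsub : Subnet r (fun a b : {i : I // sle (opens X) y (xi i)} => r a.1 b.1)
              (fun a => a.1) := by
            refine ⟨hsdir, fun _ _ hab => hab, ?_⟩
            intro i
            obtain ⟨i', hi', hyi'⟩ := hev i
            exact ⟨⟨i', hyi'⟩, hi'⟩
          obtain ⟨-, hlb⟩ := hQ _ _ _ hsub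
          exact hx (hlb y ⟨hJne.some, fun j _ => j.2⟩)
      | univ =>
        obtain ⟨i0⟩ := hr.1
        exact fun _ => ⟨i0, fun _ _ => trivial⟩
      | inter U V hUg hVg ihU ihV =>
        intro hx
        obtain ⟨k1, h1⟩ := ihU hx.1
        obtain ⟨k2, h2⟩ := ihV hx.2
        obtain ⟨k, hk1, hk2⟩ := hr.2.2.2 k1 k2
        exact ⟨k, fun i hi => ⟨h1 i (hr.2.2.1 _ _ _ hk1 hi), h2 i (hr.2.2.1 _ _ _ hk2 hi)⟩⟩
      | sUnion S hSg ih =>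
        rintro ⟨V, hVS, hxV⟩
        obtain ⟨k, hk⟩ := ih V hVS hxV
        exact ⟨k, fun i hi => ⟨V, hVS, hk i hi⟩⟩
    exact fun U hU hxU => main U hU hxU

end Conv
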